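/- (Theorem 2, MSE contraction of the ISD update step.) Let (Ω, 𝔽, ℙ) be a probability space. Let ℓ : ℝⁿ × ℝ^k → ℝ be such that for every y ∈ ℝⁿ the map θ ↦ ℓ(y, θ) is twice continuously differentiable with Hessian H(y, θ) satisfying α·I ⪯ −H(y, θ) for all y, θ, where α ∈ ℝ. Let P ∈ ℝ^{k×k} be symmetric positive definite with λ_min(P) > α⁻. Let Y : Ω → ℝⁿ, θ* : Ω → ℝ^k and θ_pred : Ω → ℝ^k be random vectors, all relevant quantities square-integrable, such that (i) 𝔼[⟨θ_pred − θ*, ∇ℓ(Y, θ*)⟩] = 0 and (ii) 𝔼[‖∇ℓ(Y, θ*)‖²] ≤ σ² < ∞, where ∇ℓ denotes the gradient in the second argument. Let θ_upd : Ω → ℝ^k be a measurable random vector satisfying pathwise the implicit update θ_upd = θ_pred + P⁻¹∇ℓ(Y, θ_upd). Then 𝔼[‖θ_upd − θ*‖²_P] ≤ a·𝔼[‖θ_pred − θ*‖²_P] + a·σ²/λ_min(P), where a := (1 − α⁺/(λ_max(P) + α⁺) + α⁻/(λ_min(P) − α⁻))². -/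

import Mathlib

open Matrix

/-- Smallest eigenvalue of a (Hermitian) real matrix; junk value 0 otherwise. -/
noncomputable def lMin {k : ℕ} (A : Matrix (Fin k) (Fin k) ℝ) : ℝ :=
  letI := Classical.propDecidable A.IsHermitian
  if h : A.IsHermitian then ⨅ i, h.eigenvalues i else 0

/-- Largest eigenvalue of a (Hermitian) real matrix; junk value 0 otherwise. -/
noncomputable def lMax {k : ℕ} (A : Matrix (Fin k) (Fin k) ℝ) : ℝ :=
  letI := Classical.propDecidable A.IsHermitian
  if h : A.IsHermitian then ⨆ i, h.eigenvalues i else 0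

/-- P-weighted squared vector norm `‖x‖_P² = xᵀ P x`. -/
def wq {k : ℕ} (P : Matrix (Fin k) (Fin k) ℝ) (x : Fin k → ℝ) : ℝ := x ⬝ᵥ P *ᵥ x

/-- Induced P-weighted matrix norm `‖A‖_P = sup_{x ≠ 0} ‖Ax‖_P / ‖x‖_P`. -/
noncomputable def wMatNorm {k : ℕ} (P A : Matrix (Fin k) (Fin k) ℝ) : ℝ :=
  sSup {r : ℝ | ∃ x : Fin k → ℝ, x ≠ 0 ∧ r = Real.sqrt (wq P (A *ᵥ x)) / Real.sqrt (wq P x)}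


section AuxISD

lemma strong_mono {n k : ℕ}
    (G : (Fin n → ℝ) → (Fin k → ℝ) → (Fin k → ℝ))
    (Hs : (Fin n → ℝ) → (Fin k → ℝ) → Matrix (Fin k) (Fin k) ℝ) (α : ℝ)
    (hhess : ∀ y θv, HasFDerivAt (G y)
      (LinearMap.toContinuousLinearMap (Hs y θv).mulVecLin) θv)
    (hcurv : ∀ y θv, (-(Hs y θv) - α • (1 : Matrix (Fin k) (Fin k) ℝ)).PosSemidef)
    (y : Fin n → ℝ) (u v : Fin k → ℝ) :
    (G y u - G y v) ⬝ᵥ (u - v) ≤ -α * ((u - v) ⬝ᵥ (u - v)) := by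
  set d : Fin k → ℝ := u - v with hd
  set γ : ℝ → (Fin k → ℝ) := fun t => v + t • d with hγ
  have hpath : ∀ t : ℝ, HasDerivAt γ d t := by
    intro t
    have h1 : HasDerivAt (fun t : ℝ => t • d) ((1:ℝ) • d) t := (hasDerivAt_id t).smul_const d
    have h2 := h1.const_add v
    rw [one_smul] at h2
    exact h2
  have hG : ∀ t : ℝ, HasDerivAt (fun t => G y (γ t)) ((Hs y (γ t)) *ᵥ d) t := by
    intro t
    have := (hhess y (γ t)).comp_hasDerivAt t (hpath t)
    exact this
  set f : ℝ → ℝ := fun t => G y (γ t) ⬝ᵥ d with hf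
  have hfd : ∀ t : ℝ, HasDerivAt f (((Hs y (γ t)) *ᵥ d) ⬝ᵥ d) t := by
    intro t
    have : ∀ i : Fin k, HasDerivAt (fun t => G y (γ t) i * d i)
        (((Hs y (γ t)) *ᵥ d) i * d i) t := by
      intro i
      have hc : HasDerivAt (fun t => G y (γ t) i) (((Hs y (γ t)) *ᵥ d) i) t := by
        have := (ContinuousLinearMap.proj (R := ℝ) (φ := fun _ : Fin k => ℝ) i).hasFDerivAt.comp_hasDerivAt t (hG t)
        exact this
      exact hc.mul_const (d i)
    have hsum := HasDerivAt.fun_sum (fun i (_ : i ∈ Finset.univ) => this i)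
    simpa [dotProduct, hf] using hsum
  set g : ℝ → ℝ := fun t => f t + α * (t * (d ⬝ᵥ d)) with hg
  have hgd : ∀ t : ℝ, HasDerivAt g (((Hs y (γ t)) *ᵥ d) ⬝ᵥ d + α * (d ⬝ᵥ d)) t := by
    intro t
    exact (hfd t).add ((hasDerivAt_mul_const (d ⬝ᵥ d)).const_mul α)
  have hderiv_nonpos : ∀ t : ℝ, ((Hs y (γ t)) *ᵥ d) ⬝ᵥ d + α * (d ⬝ᵥ d) ≤ 0 := by
    intro t
    have h := (hcurv y (γ t)).dotProduct_mulVec_nonneg d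
    rw [star_trivial] at h
    rw [sub_mulVec, neg_mulVec, dotProduct_sub, dotProduct_neg] at h
    have h1 : (α • (1 : Matrix (Fin k) (Fin k) ℝ)) *ᵥ d = α • d := by
      rw [smul_mulVec, one_mulVec]
    rw [h1, dotProduct_smul] at h
    have : d ⬝ᵥ Hs y (γ t) *ᵥ d = ((Hs y (γ t)) *ᵥ d) ⬝ᵥ d := dotProduct_comm _ _
    simp only [smul_eq_mul] at h
    linarith [this ▸ h]
  have hanti : AntitoneOn g (Set.Icc (0:ℝ) 1) := by
    apply antitoneOn_of_deriv_nonpos (convex_Icc 0 1)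
    · exact fun t _ => (hgd t).continuousAt.continuousWithinAt
    · exact fun t _ => (hgd t).differentiableAt.differentiableWithinAt
    · intro t _
      rw [(hgd t).deriv]
      exact hderiv_nonpos t
  have h01 : g 1 ≤ g 0 := hanti (Set.left_mem_Icc.2 zero_le_one) (Set.right_mem_Icc.2 zero_le_one) zero_le_one
  have hγ0 : γ 0 = v := by simp [hγ]
  have hγ1 : γ 1 = u := by simp [hγ, hd]
  have : G y u ⬝ᵥ d + α * (d ⬝ᵥ d) ≤ G y v ⬝ᵥ d := by
    simpa [hg, hf, hγ0, hγ1] using h01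
  rw [sub_dotProduct]
  linarith

variable {k : ℕ}

lemma star_eq_trans (U : Matrix (Fin k) (Fin k) ℝ) : star U = Uᵀ := by
  ext i j; simp [conjTranspose_apply]

lemma spectral_quad {A : Matrix (Fin k) (Fin k) ℝ} (hA : A.IsHermitian) (x : Fin k → ℝ) :
    x ⬝ᵥ A *ᵥ x = ∑ i, hA.eigenvalues i *
      ((star (hA.eigenvectorUnitary : Matrix (Fin k) (Fin k) ℝ) *ᵥ x) i)^2 := by
  set U : Matrix (Fin k) (Fin k) ℝ := (hA.eigenvectorUnitary : Matrix (Fin k) (Fin k) ℝ) with hU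
  set y : Fin k → ℝ := star U *ᵥ x with hy
  have hspec := hA.spectral_theorem
  calc x ⬝ᵥ A *ᵥ x
      = x ⬝ᵥ (U * (diagonal (RCLike.ofReal ∘ hA.eigenvalues)) * star U) *ᵥ x := by
          rw [Unitary.conjStarAlgAut_apply] at hspec
          exact congrArg (fun M => x ⬝ᵥ M *ᵥ x) hspec
    _ = (x ᵥ* U) ⬝ᵥ (diagonal (RCLike.ofReal ∘ hA.eigenvalues) *ᵥ y) := by
        rw [← mulVec_mulVec, ← mulVec_mulVec, dotProduct_mulVec]
    _ = y ⬝ᵥ (diagonal (RCLike.ofReal ∘ hA.eigenvalues) *ᵥ y) := by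
        rw [hy, star_eq_trans, mulVec_transpose]
    _ = ∑ i, hA.eigenvalues i * (y i)^2 := by
        simp [dotProduct, mulVec_diagonal, RCLike.ofReal_real_eq_id]
        exact Finset.sum_congr rfl fun i _ => by ring

lemma unitary_dot {A : Matrix (Fin k) (Fin k) ℝ} (hA : A.IsHermitian) (x : Fin k → ℝ) :
    (star (hA.eigenvectorUnitary : Matrix (Fin k) (Fin k) ℝ) *ᵥ x) ⬝ᵥ
    (star (hA.eigenvectorUnitary : Matrix (Fin k) (Fin k) ℝ) *ᵥ x) = x ⬝ᵥ x := by
  set U : Matrix (Fin k) (Fin k) ℝ := (hA.eigenvectorUnitary : Matrix (Fin k) (Fin k) ℝ) with hU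
  have h1 : U * star U = 1 := (Matrix.mem_unitaryGroup_iff).mp hA.eigenvectorUnitary.2
  calc (star U *ᵥ x) ⬝ᵥ (star U *ᵥ x)
      = (x ᵥ* U) ⬝ᵥ (star U *ᵥ x) := by rw [star_eq_trans, mulVec_transpose]
    _ = x ⬝ᵥ (U *ᵥ (star U *ᵥ x)) := (dotProduct_mulVec x U _).symm
    _ = x ⬝ᵥ x := by rw [mulVec_mulVec, h1, one_mulVec]

lemma lMin_eq {A : Matrix (Fin k) (Fin k) ℝ} (hA : A.IsHermitian) :
    lMin A = ⨅ i, hA.eigenvalues i := by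
  unfold lMin; rw [dif_pos hA]

lemma lMax_eq {A : Matrix (Fin k) (Fin k) ℝ} (hA : A.IsHermitian) :
    lMax A = ⨆ i, hA.eigenvalues i := by
  unfold lMax; rw [dif_pos hA]

lemma lMin_le_eig {A : Matrix (Fin k) (Fin k) ℝ} (hA : A.IsHermitian) (i : Fin k) :
    lMin A ≤ hA.eigenvalues i := by
  rw [lMin_eq hA]
  exact ciInf_le (Set.Finite.bddBelow (Set.finite_range _)) i

lemma eig_le_lMax {A : Matrix (Fin k) (Fin k) ℝ} (hA : A.IsHermitian) (i : Fin k) :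
    hA.eigenvalues i ≤ lMax A := by
  rw [lMax_eq hA]
  exact le_ciSup (Set.Finite.bddAbove (Set.finite_range _)) i

lemma dot_self_eq_sum_sq (y : Fin k → ℝ) : y ⬝ᵥ y = ∑ i, (y i)^2 := by
  simp [dotProduct, sq]

lemma rayleigh_lower {A : Matrix (Fin k) (Fin k) ℝ} (hA : A.IsHermitian) [Nonempty (Fin k)]
    (x : Fin k → ℝ) : lMin A * (x ⬝ᵥ x) ≤ x ⬝ᵥ A *ᵥ x := by
  rw [spectral_quad hA x, ← unitary_dot hA x, dot_self_eq_sum_sq, Finset.mul_sum]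
  exact Finset.sum_le_sum fun i _ => mul_le_mul_of_nonneg_right (lMin_le_eig hA i) (sq_nonneg _)

lemma rayleigh_upper {A : Matrix (Fin k) (Fin k) ℝ} (hA : A.IsHermitian) [Nonempty (Fin k)]
    (x : Fin k → ℝ) : x ⬝ᵥ A *ᵥ x ≤ lMax A * (x ⬝ᵥ x) := by
  rw [spectral_quad hA x, ← unitary_dot hA x, dot_self_eq_sum_sq, Finset.mul_sum]
  exact Finset.sum_le_sum fun i _ => mul_le_mul_of_nonneg_right (eig_le_lMax hA i) (sq_nonneg _)

open scoped MatrixOrder in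
noncomputable def Matrix.PosSemidef.sqrt {P : Matrix (Fin k) (Fin k) ℝ} (_hP : P.PosSemidef) :
    Matrix (Fin k) (Fin k) ℝ := CFC.sqrt P

open scoped MatrixOrder in
lemma Matrix.PosSemidef.sqrt_mul_self {P : Matrix (Fin k) (Fin k) ℝ} (hP : P.PosSemidef) :
    hP.sqrt * hP.sqrt = P := CFC.sqrt_mul_sqrt_self P hP.nonneg

open scoped MatrixOrder in
lemma Matrix.PosSemidef.posSemidef_sqrt {P : Matrix (Fin k) (Fin k) ℝ} (hP : P.PosSemidef) :
    hP.sqrt.PosSemidef := (CFC.sqrt_nonneg P).posSemidef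

lemma dot_sqrt {P : Matrix (Fin k) (Fin k) ℝ} (hP : P.PosSemidef) (x v : Fin k → ℝ) :
    x ⬝ᵥ P *ᵥ v = (hP.sqrt *ᵥ x) ⬝ᵥ (hP.sqrt *ᵥ v) := by
  set Q := hP.sqrt with hQ
  have hQt : Qᵀ = Q := by rw [← star_eq_trans]; exact hP.posSemidef_sqrt.1
  calc x ⬝ᵥ P *ᵥ v = x ⬝ᵥ (Q * Q) *ᵥ v := by rw [hP.sqrt_mul_self]
    _ = (x ᵥ* Q) ⬝ᵥ (Q *ᵥ v) := by rw [← mulVec_mulVec, dotProduct_mulVec]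
    _ = (Q *ᵥ x) ⬝ᵥ (Q *ᵥ v) := by
        have hxQ : x ᵥ* Q = Q *ᵥ x := by rw [← mulVec_transpose, hQt]
        rw [hxQ]

lemma cauchy_schwarz_P {P : Matrix (Fin k) (Fin k) ℝ} (hP : P.PosSemidef) (x v : Fin k → ℝ) :
    (x ⬝ᵥ P *ᵥ v)^2 ≤ (x ⬝ᵥ P *ᵥ x) * (v ⬝ᵥ P *ᵥ v) := by
  rw [dot_sqrt hP x v, dot_sqrt hP x x, dot_sqrt hP v v,
    dot_self_eq_sum_sq, dot_self_eq_sum_sq]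
  exact Finset.sum_mul_sq_le_sq_mul_sq Finset.univ _ _

lemma inv_quad_bound {P : Matrix (Fin k) (Fin k) ℝ} (hP : P.PosDef) [Nonempty (Fin k)]
    (g : Fin k → ℝ) : lMin P * (g ⬝ᵥ P⁻¹ *ᵥ g) ≤ g ⬝ᵥ g := by
  have hps := hP.posSemidef
  set Q := hps.sqrt with hQdef
  have hQQ : Q * Q = P := hps.sqrt_mul_self
  have hQt : Qᵀ = Q := by rw [← star_eq_trans]; exact hps.posSemidef_sqrt.1
  have hdet : IsUnit Q.det := by
    have : Q.det * Q.det = P.det := by rw [← det_mul, hQQ]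
    have hPdet := hP.det_pos
    refine isUnit_iff_ne_zero.2 fun h => ?_
    rw [h, mul_zero] at this
    exact absurd this.symm hPdet.ne'
  have hPinv : P⁻¹ = Q⁻¹ * Q⁻¹ := by rw [← hQQ, Matrix.mul_inv_rev]
  have hQinvT : Q⁻¹ᵀ = Q⁻¹ := by rw [Matrix.transpose_nonsing_inv, hQt]
  set z := Q⁻¹ *ᵥ g with hz
  have h1 : g ⬝ᵥ P⁻¹ *ᵥ g = z ⬝ᵥ z := by
    rw [hPinv, ← mulVec_mulVec, hz]
    rw [dotProduct_mulVec g Q⁻¹, ← mulVec_transpose, hQinvT]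
  have h2 : z ⬝ᵥ P *ᵥ z = g ⬝ᵥ g := by
    rw [dot_sqrt hps z z, ← hQdef, hz, mulVec_mulVec, Matrix.mul_nonsing_inv Q hdet, one_mulVec]
  calc lMin P * (g ⬝ᵥ P⁻¹ *ᵥ g) = lMin P * (z ⬝ᵥ z) := by rw [h1]
    _ ≤ z ⬝ᵥ P *ᵥ z := rayleigh_lower hP.1 z
    _ = g ⬝ᵥ g := h2

lemma mulVec_dot {k : ℕ} (M : Matrix (Fin k) (Fin k) ℝ) (g w : Fin k → ℝ) :
    (M *ᵥ g) ⬝ᵥ w = g ⬝ᵥ (Mᵀ *ᵥ w) := by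
  rw [dotProduct_comm, dotProduct_mulVec, ← mulVec_transpose, dotProduct_comm]

end AuxISD

open MeasureTheory

/-- Theorem 2, MSE contraction of the implicit score-driven update step.
`ℓ y θ` is the postulated log density, `G = ∇ℓ` its gradient and `Hs = ∇²ℓ` its (continuous,
symmetric) Hessian in `θ`, with `α·I ⪯ −Hs(y,θ)` everywhere and `λ_min(P) > α⁻`.  If the score
at the pseudo-truth is orthogonal to the prediction error and has second moment at most `σ²`,
and `θ_upd = θ_pred + P⁻¹∇ℓ(Y, θ_upd)` pathwise, then
`𝔼‖θ_upd − θ*‖²_P ≤ a 𝔼‖θ_pred − θ*‖²_P + a σ²/λ_min(P)` with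
`a = (1 − α⁺/(λ_max(P)+α⁺) + α⁻/(λ_min(P)−α⁻))²`. -/
theorem isd_update_mse_contraction {n k : ℕ}
    {Ω : Type*} [MeasurableSpace Ω] (μ : Measure Ω) [IsProbabilityMeasure μ]
    (ℓ : (Fin n → ℝ) → (Fin k → ℝ) → ℝ)
    (G : (Fin n → ℝ) → (Fin k → ℝ) → (Fin k → ℝ))
    (Hs : (Fin n → ℝ) → (Fin k → ℝ) → Matrix (Fin k) (Fin k) ℝ)
    (α : ℝ)
    (hgrad : ∀ y θv, HasFDerivAt (ℓ y)
      (∑ i, G y θv i • (ContinuousLinearMap.proj i : (Fin k → ℝ) →L[ℝ] ℝ)) θv)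
    (hhess : ∀ y θv, HasFDerivAt (G y)
      (LinearMap.toContinuousLinearMap (Hs y θv).mulVecLin) θv)
    (hHscont : ∀ y, Continuous (Hs y))
    (hHssymm : ∀ y θv, (Hs y θv).IsHermitian)
    (hcurv : ∀ y θv, (-(Hs y θv) - α • (1 : Matrix (Fin k) (Fin k) ℝ)).PosSemidef)
    (P : Matrix (Fin k) (Fin k) ℝ) (hP : P.PosDef) (hpen : max (-α) 0 < lMin P)
    (Y : Ω → (Fin n → ℝ)) (θstar θpred θupd : Ω → (Fin k → ℝ)) (σ : ℝ)
    (hintpred : Integrable (fun w => wq P (θpred w - θstar w)) μ)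
    (hintupd : Integrable (fun w => wq P (θupd w - θstar w)) μ)
    (hintscore : Integrable (fun w => G (Y w) (θstar w) ⬝ᵥ G (Y w) (θstar w)) μ)
    (hintcross : Integrable (fun w => (θpred w - θstar w) ⬝ᵥ G (Y w) (θstar w)) μ)
    (horth : ∫ w, (θpred w - θstar w) ⬝ᵥ G (Y w) (θstar w) ∂μ = 0)
    (hsig : ∫ w, G (Y w) (θstar w) ⬝ᵥ G (Y w) (θstar w) ∂μ ≤ σ ^ 2)
    (hupd : ∀ w, θupd w = θpred w + P⁻¹ *ᵥ G (Y w) (θupd w)) :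
    ∫ w, wq P (θupd w - θstar w) ∂μ ≤
      (1 - max α 0 / (lMax P + max α 0) + max (-α) 0 / (lMin P - max (-α) 0)) ^ 2
          * ∫ w, wq P (θpred w - θstar w) ∂μ
        + (1 - max α 0 / (lMax P + max α 0) + max (-α) 0 / (lMin P - max (-α) 0)) ^ 2
          * σ ^ 2 / lMin P := by
  classical
  rcases Nat.eq_zero_or_pos k with hk | hk
  · exfalso
    subst hk
    have h0 : lMin P = 0 := by rw [lMin_eq hP.1]; exact Real.iInf_of_isEmpty _
    rw [h0] at hpen
    exact absurd hpen (not_lt.2 (le_max_right _ _))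
  haveI : Nonempty (Fin k) := Fin.pos_iff_nonempty.mp hk
  have i0 : Fin k := ⟨0, hk⟩
  have hlmin : 0 < lMin P := lt_of_le_of_lt (le_max_right (-α) 0) hpen
  have hlmaxmin : lMin P ≤ lMax P := (lMin_le_eig hP.1 i0).trans (eig_le_lMax hP.1 i0)
  have hlmax : 0 < lMax P := hlmin.trans_le hlmaxmin
  have hnegα : -α < lMin P := lt_of_le_of_lt (le_max_left (-α) 0) hpen
  set b : ℝ := 1 - max α 0 / (lMax P + max α 0) + max (-α) 0 / (lMin P - max (-α) 0) with hbdef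
  set c₀ : ℝ := 1 + max α 0 / lMax P - max (-α) 0 / lMin P with hc0def
  have hc0pos : 0 < c₀ := by
    rcases le_total 0 α with h | h
    · have h1 : max (-α) 0 = 0 := max_eq_right (neg_nonpos.2 h)
      have h2 : 0 ≤ max α 0 / lMax P := div_nonneg (le_max_right α 0) hlmax.le
      rw [hc0def, h1]
      simp only [zero_div, sub_zero]
      linarith
    · have h1 : max α 0 = 0 := max_eq_right h
      have h2 : max (-α) 0 / lMin P < 1 := (div_lt_one hlmin).2 hpen
      rw [hc0def, h1]
      simp only [zero_div, add_zero]
      linarith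
  have hbc : b = 1 / c₀ := by
    rcases le_total 0 α with h | h
    · have h1 : max (-α) 0 = 0 := max_eq_right (neg_nonpos.2 h)
      have h2 : max α 0 = α := max_eq_left h
      rw [hbdef, hc0def, h1, h2]
      have hDne : lMax P + α ≠ 0 := (by linarith : (0:ℝ) < lMax P + α).ne'
      have e1 : 1 + α / lMax P - 0 / lMin P = (lMax P + α) / lMax P := by
        rw [zero_div, sub_zero, add_div, div_self hlmax.ne']
      have e2 : 1 - α / (lMax P + α) + 0 / (lMin P - 0) = lMax P / (lMax P + α) := by
        rw [zero_div, add_zero, eq_div_iff hDne, sub_mul, one_mul, div_mul_cancel₀ _ hDne]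
        ring
      rw [e1, e2, one_div_div]
    · have h1 : max α 0 = 0 := max_eq_right h
      have h2 : max (-α) 0 = -α := max_eq_left (neg_nonneg.2 h)
      rw [hbdef, hc0def, h1, h2]
      have hDne : lMin P - -α ≠ 0 := (by linarith : (0:ℝ) < lMin P - -α).ne'
      have e1 : 1 + 0 / lMax P - -α / lMin P = (lMin P - -α) / lMin P := by
        rw [zero_div, add_zero, sub_div, div_self hlmin.ne']
      have e2 : 1 - 0 / (lMax P + 0) + -α / (lMin P - -α) = lMin P / (lMin P - -α) := by
        rw [zero_div, sub_zero, eq_div_iff hDne, add_mul, one_mul, div_mul_cancel₀ _ hDne]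
        ring
      rw [e1, e2, one_div_div]
  have hbpos : 0 < b := by rw [hbc]; exact one_div_pos.2 hc0pos
  have hPdetU : IsUnit P.det := isUnit_iff_ne_zero.2 hP.det_pos.ne'
  have hPP : P * P⁻¹ = 1 := Matrix.mul_nonsing_inv P hPdetU
  have hPPl : P⁻¹ * P = 1 := Matrix.nonsing_inv_mul P hPdetU
  have hPt : Pᵀ = P := by rw [← star_eq_trans]; exact hP.1
  have hPinvT : P⁻¹ᵀ = P⁻¹ := by rw [Matrix.transpose_nonsing_inv, hPt]
  have key : ∀ w, wq P (θupd w - θstar w) ≤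
      b^2 * (wq P (θpred w - θstar w)
        + 2 * ((θpred w - θstar w) ⬝ᵥ G (Y w) (θstar w))
        + (lMin P)⁻¹ * (G (Y w) (θstar w) ⬝ᵥ G (Y w) (θstar w))) := by
    intro w
    set gu : Fin k → ℝ := G (Y w) (θupd w) with hgu
    set gv : Fin k → ℝ := G (Y w) (θstar w) with hgv
    set x : Fin k → ℝ := θupd w - θstar w with hx
    set e : Fin k → ℝ := θpred w - θstar w with he
    set v : Fin k → ℝ := e + P⁻¹ *ᵥ gv with hv
    have hxv : x = v + P⁻¹ *ᵥ (gu - gv) := by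
      rw [hx, hv, he, hupd w, mulVec_sub]
      abel
    have hPx : P *ᵥ x = P *ᵥ v + (gu - gv) := by
      rw [hxv, mulVec_add, mulVec_mulVec, hPP, one_mulVec]
    have hsplit : wq P x = x ⬝ᵥ P *ᵥ v + x ⬝ᵥ (gu - gv) := by
      rw [wq, hPx, dotProduct_add]
    have hmono : x ⬝ᵥ (gu - gv) ≤ -α * (x ⬝ᵥ x) := by
      rw [dotProduct_comm]
      exact strong_mono G Hs α hhess hcurv (Y w) (θupd w) (θstar w)
    have hcurvb : -α * (x ⬝ᵥ x) ≤ (max (-α) 0 / lMin P - max α 0 / lMax P) * wq P x := by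
      have hwq : wq P x = x ⬝ᵥ P *ᵥ x := rfl
      rcases le_total 0 α with h | h
      · have h1 : max (-α) 0 = 0 := max_eq_right (neg_nonpos.2 h)
        have h2 : max α 0 = α := max_eq_left h
        rw [h1, h2, hwq]
        have hru := rayleigh_upper hP.1 x
        have hm : (α / lMax P) * (x ⬝ᵥ P *ᵥ x) ≤ (α / lMax P) * (lMax P * (x ⬝ᵥ x)) :=
          mul_le_mul_of_nonneg_left hru (div_nonneg h hlmax.le)
        have he2 : (α / lMax P) * (lMax P * (x ⬝ᵥ x)) = α * (x ⬝ᵥ x) := by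
          field_simp
        rw [zero_div, zero_sub, neg_mul]
        linarith
      · have h1 : max α 0 = 0 := max_eq_right h
        have h2 : max (-α) 0 = -α := max_eq_left (neg_nonneg.2 h)
        rw [h1, h2, hwq]
        have hrl := rayleigh_lower hP.1 x
        have hm : (-α / lMin P) * (lMin P * (x ⬝ᵥ x)) ≤ (-α / lMin P) * (x ⬝ᵥ P *ᵥ x) :=
          mul_le_mul_of_nonneg_left hrl (div_nonneg (neg_nonneg.2 h) hlmin.le)
        have he2 : (-α / lMin P) * (lMin P * (x ⬝ᵥ x)) = -α * (x ⬝ᵥ x) := by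
          field_simp
        rw [zero_div, sub_zero]
        linarith
    have hkey1 : c₀ * wq P x ≤ x ⬝ᵥ P *ᵥ v := by
      rw [hc0def]
      have hup : wq P x ≤ x ⬝ᵥ P *ᵥ v
          + (max (-α) 0 / lMin P - max α 0 / lMax P) * wq P x := by
        linarith [hsplit, hmono, hcurvb]
      have hexp : (1 + max α 0 / lMax P - max (-α) 0 / lMin P) * wq P x
          = wq P x - (max (-α) 0 / lMin P - max α 0 / lMax P) * wq P x := by ring
      rw [hexp]
      linarith
    have hCS := cauchy_schwarz_P hP.posSemidef x v
    have hwx : 0 ≤ wq P x := by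
      have := hP.posSemidef.dotProduct_mulVec_nonneg x; rwa [star_trivial] at this
    have hwv : 0 ≤ wq P v := by
      have := hP.posSemidef.dotProduct_mulVec_nonneg v; rwa [star_trivial] at this
    have hcontr : wq P x ≤ b^2 * wq P v := by
      rcases eq_or_lt_of_le hwx with h0 | h0
      · rw [← h0]
        exact mul_nonneg (sq_nonneg b) hwv
      · have hcw : 0 ≤ c₀ * wq P x := mul_nonneg hc0pos.le hwx
        have hpv : 0 ≤ x ⬝ᵥ P *ᵥ v := hcw.trans hkey1
        have hsq : (c₀ * wq P x)^2 ≤ (x ⬝ᵥ P *ᵥ v)^2 := by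
          apply sq_le_sq' (by linarith) hkey1
        have h2 : c₀^2 * (wq P x)^2 ≤ wq P x * wq P v := by
          calc c₀^2 * (wq P x)^2 = (c₀ * wq P x)^2 := by ring
            _ ≤ (x ⬝ᵥ P *ᵥ v)^2 := hsq
            _ ≤ wq P x * wq P v := hCS
        have h2' : (c₀^2 * wq P x) * wq P x ≤ wq P v * wq P x := by
          calc (c₀^2 * wq P x) * wq P x = c₀^2 * (wq P x)^2 := by ring
            _ ≤ wq P x * wq P v := h2
            _ = wq P v * wq P x := by ring
        have h3 : c₀^2 * wq P x ≤ wq P v := le_of_mul_le_mul_right h2' h0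
        calc wq P x ≤ wq P v / c₀^2 := (le_div_iff₀ (by positivity)).2 (by linarith)
          _ = b^2 * wq P v := by rw [hbc, div_pow, one_pow, div_mul_eq_mul_div, one_mul]
    have hvexp : wq P v = wq P e + 2 * (e ⬝ᵥ gv) + gv ⬝ᵥ P⁻¹ *ᵥ gv := by
      have hePz : e ⬝ᵥ P *ᵥ (P⁻¹ *ᵥ gv) = e ⬝ᵥ gv := by
        rw [mulVec_mulVec, hPP, one_mulVec]
      have hzPe : (P⁻¹ *ᵥ gv) ⬝ᵥ P *ᵥ e = e ⬝ᵥ gv := by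
        rw [mulVec_dot, hPinvT, mulVec_mulVec, hPPl, one_mulVec, dotProduct_comm]
      have hzPz : (P⁻¹ *ᵥ gv) ⬝ᵥ P *ᵥ (P⁻¹ *ᵥ gv) = gv ⬝ᵥ P⁻¹ *ᵥ gv := by
        rw [mulVec_dot, hPinvT, mulVec_mulVec, mulVec_mulVec, hPPl, one_mul]
      rw [wq, wq, hv, mulVec_add, dotProduct_add, add_dotProduct, add_dotProduct,
        hePz, hzPe, hzPz]
      ring
    have hinvb : gv ⬝ᵥ P⁻¹ *ᵥ gv ≤ (lMin P)⁻¹ * (gv ⬝ᵥ gv) := by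
      have h := inv_quad_bound hP gv
      rw [inv_mul_eq_div, le_div_iff₀ hlmin]
      linarith
    calc wq P x ≤ b^2 * wq P v := hcontr
      _ ≤ b^2 * (wq P e + 2 * (e ⬝ᵥ gv) + (lMin P)⁻¹ * (gv ⬝ᵥ gv)) := by
          apply mul_le_mul_of_nonneg_left _ (sq_nonneg b)
          rw [hvexp]
          linarith
  -- integration
  have hint2 : Integrable (fun w => 2 * ((θpred w - θstar w) ⬝ᵥ G (Y w) (θstar w))) μ :=
    hintcross.const_mul 2
  have hint3 : Integrable
      (fun w => (lMin P)⁻¹ * (G (Y w) (θstar w) ⬝ᵥ G (Y w) (θstar w))) μ :=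
    hintscore.const_mul _
  have hsumint : Integrable (fun w => wq P (θpred w - θstar w)
      + 2 * ((θpred w - θstar w) ⬝ᵥ G (Y w) (θstar w))
      + (lMin P)⁻¹ * (G (Y w) (θstar w) ⬝ᵥ G (Y w) (θstar w))) μ :=
    (hintpred.add hint2).add hint3
  have hRHSint := hsumint.const_mul (b^2)
  have hmain : ∫ w, wq P (θupd w - θstar w) ∂μ ≤
      ∫ w, b^2 * (wq P (θpred w - θstar w)
        + 2 * ((θpred w - θstar w) ⬝ᵥ G (Y w) (θstar w))
        + (lMin P)⁻¹ * (G (Y w) (θstar w) ⬝ᵥ G (Y w) (θstar w))) ∂μ :=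
    integral_mono hintupd hRHSint key
  have hintAB : Integrable (fun w => wq P (θpred w - θstar w)
      + 2 * ((θpred w - θstar w) ⬝ᵥ G (Y w) (θstar w))) μ := hintpred.add hint2
  rw [integral_const_mul] at hmain
  rw [integral_add hintAB hint3, integral_add hintpred hint2,
    integral_const_mul, integral_const_mul, horth, mul_zero, add_zero] at hmain
  have hsc : b^2 * (lMin P)⁻¹ * (∫ w, G (Y w) (θstar w) ⬝ᵥ G (Y w) (θstar w) ∂μ)
      ≤ b^2 * (lMin P)⁻¹ * σ^2 :=
    mul_le_mul_of_nonneg_left hsig (by positivity)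
  have hfin : b^2 * σ^2 / lMin P = b^2 * (lMin P)⁻¹ * σ^2 := by
    field_simp
  rw [hfin]
  nlinarith [hmain, hsc]
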